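/- arXiv:2207.02414 — 4 statements merged into one kernel-verified Lean document; each statement's English description precedes it below -/
import Mathlib

section
/- For any complex number z with Re z > α and any real α > -1, the integral ∫₀^∞ e^{-kz}(e^k - 1)^α dk equals Γ(z - α)Γ(1 + α)/Γ(z + 1). -/
open MeasureTheory Real Set

theorem beta_integral_gamma (α : ℝ) (hα : -1 < α) (z : ℂ) (hz : α < z.re) :
    ∫ k in Ioi (0:ℝ), Complex.exp (-k * z) * ((Real.exp k - 1) ^ α : ℝ)
      = Complex.Gamma (z - α) * Complex.Gamma (1 + α) / Complex.Gamma (z + 1) := by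
  have hre : 0 < (z - (α:ℂ)).re := by
    simp only [Complex.sub_re, Complex.ofReal_re]; linarith
  have hre2 : 0 < ((1:ℂ) + (α:ℂ)).re := by
    simp only [Complex.add_re, Complex.one_re, Complex.ofReal_re]; linarith
  have hbeta := Complex.Gamma_mul_Gamma_eq_betaIntegral hre hre2
  have hzadd : z - (α:ℂ) + (1 + (α:ℂ)) = z + 1 := by ring
  rw [hzadd] at hbeta
  have hΓne : Complex.Gamma (z + 1) ≠ 0 := by
    apply Complex.Gamma_ne_zero_of_re_pos
    simp only [Complex.add_re, Complex.one_re]; linarith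
  -- image of Ioi 0 under k ↦ exp (-k) is Ioo 0 1
  have himg : (fun k : ℝ => Real.exp (-k)) '' Ioi 0 = Ioo 0 1 := by
    ext y
    simp only [mem_image, mem_Ioi, mem_Ioo]
    constructor
    · rintro ⟨k, hk, rfl⟩
      exact ⟨Real.exp_pos _, Real.exp_lt_one_iff.mpr (neg_lt_zero.mpr hk)⟩
    · rintro ⟨h0, h1⟩
      refine ⟨-Real.log y, by simpa using Real.log_neg h0 h1, by simp [Real.exp_log h0]⟩
  have key : (∫ k in Ioi (0:ℝ), Complex.exp (-k * z) * ((Real.exp k - 1) ^ α : ℝ))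
      = Complex.betaIntegral (z - α) (1 + α) := by
    rw [Complex.betaIntegral, intervalIntegral.integral_of_le zero_le_one,
      MeasureTheory.integral_Ioc_eq_integral_Ioo, ← himg,
      MeasureTheory.integral_image_eq_integral_abs_deriv_smul measurableSet_Ioi
        (f' := fun k => -Real.exp (-k))
        (fun x _ => by
          simpa [Function.comp_def] using
            ((Real.hasDerivAt_exp (-x)).comp x (hasDerivAt_neg x)).hasDerivWithinAt)
        (fun a _ b _ h => neg_injective (Real.exp_injective h))]
    apply setIntegral_congr_fun measurableSet_Ioi
    intro k hk
    have hk0 : (0:ℝ) < k := hk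
    have hek : Real.exp (-k) < 1 := Real.exp_lt_one_iff.mpr (neg_lt_zero.mpr hk0)
    have h1e : (0:ℝ) < 1 - Real.exp (-k) := by linarith
    -- factor (e^k - 1)^α = e^(kα) * (1 - e^(-k))^α
    have hfac : (Real.exp k - 1) ^ α = Real.exp (k * α) * (1 - Real.exp (-k)) ^ α := by
      have : Real.exp k - 1 = Real.exp k * (1 - Real.exp (-k)) := by
        rw [mul_sub, mul_one, ← Real.exp_add]; simp
      rw [this, Real.mul_rpow (Real.exp_pos k).le h1e.le, ← Real.exp_mul]
    -- cpow of complex exp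
    have hcpow : ((Real.exp (-k) : ℂ)) ^ (z - (α:ℂ) - 1)
        = Complex.exp ((-k) * (z - (α:ℂ) - 1)) := by
      rw [Complex.ofReal_exp, Complex.ofReal_neg,
        Complex.cpow_def_of_ne_zero (Complex.exp_ne_zero _),
        Complex.log_exp (by simpa using pi_pos) (by simpa using pi_nonneg)]
    have hcpow2 : ((1:ℂ) - (Real.exp (-k) : ℂ)) ^ ((1:ℂ) + (α:ℂ) - 1)
        = (((1 - Real.exp (-k)) ^ α : ℝ) : ℂ) := by
      have h1 : ((1:ℂ) + (α:ℂ) - 1) = (α:ℂ) := by ring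
      have h2 : ((1:ℂ) - (Real.exp (-k) : ℂ)) = ((1 - Real.exp (-k) : ℝ) : ℂ) := by
        push_cast; ring
      rw [h1, h2, ← Complex.ofReal_cpow h1e.le]
    beta_reduce
    rw [abs_neg, abs_of_pos (Real.exp_pos _), hcpow, hcpow2, Complex.real_smul, hfac]
    push_cast
    rw [← mul_assoc, ← mul_assoc, ← Complex.exp_add, ← Complex.exp_add]
    ring_nf
  rw [key, hbeta]
  field_simp
end

section
/- Let w(k) = [(e^k - 1)^{3/2} + 6(e^k - 1)^{1/2} - 6·arctan((e^k - 1)^{1/2})] for k > 0 and w(k) = 0 for k ≤ 0. Then for all complex z with Re z > 3/2, the Laplace transform W(z) = ∫₀^∞ e^{-kz} w(k) dk equals 9√π · (Γ(z + 1/2)/Γ(z + 1)) · (z - 1)/(z(2z - 1)(2z - 3)). -/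
open MeasureTheory Real Set

/-- The weight `w` from the paper. -/
noncomputable def w (k : ℝ) : ℝ :=
  if 0 < k then
    (Real.exp k - 1) ^ (3/2 : ℝ) + 6 * (Real.exp k - 1) ^ (1/2 : ℝ)
      - 6 * Real.arctan ((Real.exp k - 1) ^ (1/2 : ℝ))
  else 0

open Filter Topology

noncomputable def wAux (k : ℝ) : ℝ :=
  (Real.exp k - 1) ^ (3/2 : ℝ) + 6 * (Real.exp k - 1) ^ (1/2 : ℝ)
    - 6 * Real.arctan ((Real.exp k - 1) ^ (1/2 : ℝ))

-- continuity
lemma crp (q : ℝ) (hq : 0 ≤ q) : Continuous (fun x : ℝ => x ^ q) :=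
  continuous_iff_continuousAt.mpr fun x => Real.continuousAt_rpow_const _ _ (Or.inr hq)

lemma cwAux : Continuous wAux := by
  have cA : Continuous (fun k : ℝ => Real.exp k - 1) := by continuity
  exact (((crp (3/2) (by norm_num)).comp cA).add
      (continuous_const.mul ((crp (1/2) (by norm_num)).comp cA))).sub
    (continuous_const.mul (Real.continuous_arctan.comp ((crp (1/2) (by norm_num)).comp cA)))

lemma cexpz (z : ℂ) : Continuous (fun k : ℝ => Complex.exp (-k * z)) := by
  fun_prop

lemma wAux_zero : wAux 0 = 0 := by
  simp [wAux, Real.zero_rpow (by norm_num : (3/2:ℝ) ≠ 0), Real.zero_rpow (by norm_num : (1/2:ℝ) ≠ 0)]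

-- bound lemma
lemma wAux_bound {k : ℝ} (hk : 0 ≤ k) :
    |wAux k| ≤ Real.exp (k * (3/2)) + 6 * Real.exp (k * (1/2)) + 12 := by
  have he1 : (1:ℝ) ≤ Real.exp k := Real.one_le_exp hk
  have hx0 : (0:ℝ) ≤ Real.exp k - 1 := by linarith
  have hw1 : (Real.exp k - 1) ^ (3/2:ℝ) ≤ Real.exp (k * (3/2)) := by
    calc (Real.exp k - 1) ^ (3/2:ℝ) ≤ (Real.exp k) ^ (3/2:ℝ) :=
          Real.rpow_le_rpow hx0 (by linarith) (by norm_num)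
      _ = Real.exp (k * (3/2)) := by
          rw [Real.rpow_def_of_pos (Real.exp_pos k), Real.log_exp]
  have hw2 : (Real.exp k - 1) ^ (1/2:ℝ) ≤ Real.exp (k * (1/2)) := by
    calc (Real.exp k - 1) ^ (1/2:ℝ) ≤ (Real.exp k) ^ (1/2:ℝ) :=
          Real.rpow_le_rpow hx0 (by linarith) (by norm_num)
      _ = Real.exp (k * (1/2)) := by
          rw [Real.rpow_def_of_pos (Real.exp_pos k), Real.log_exp]
  have hn1 : 0 ≤ (Real.exp k - 1) ^ (3/2:ℝ) := Real.rpow_nonneg hx0 _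
  have hn2 : 0 ≤ (Real.exp k - 1) ^ (1/2:ℝ) := Real.rpow_nonneg hx0 _
  have hπ : π ≤ 4 := Real.pi_le_four
  have ha1 := Real.arctan_lt_pi_div_two ((Real.exp k - 1) ^ (1/2:ℝ))
  have ha2 := Real.neg_pi_div_two_lt_arctan ((Real.exp k - 1) ^ (1/2:ℝ))
  have he2 : (0:ℝ) < Real.exp (k * (1/2)) := Real.exp_pos _
  rw [abs_le]; unfold wAux
  constructor <;> nlinarith

lemma norm_integrand (z : ℂ) (k : ℝ) (r : ℝ) :
    ‖Complex.exp (-k * z) * (r : ℂ)‖ = Real.exp (-(k * z.re)) * |r| := by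
  rw [norm_mul, Complex.norm_exp, Complex.norm_real, Real.norm_eq_abs]
  congr 2
  simp

lemma harct (z : ℂ) (hz0 : 0 < z.re) :
    IntegrableOn (fun k : ℝ =>
      Complex.exp (-k * z) * ((Real.arctan ((Real.exp k - 1) ^ (1/2:ℝ)) : ℝ) : ℂ)) (Ioi 0) := by
  have hg : IntegrableOn (fun k : ℝ => 2 * Real.exp (-z.re * k)) (Ioi 0) :=
    (exp_neg_integrableOn_Ioi 0 hz0).const_mul 2
  apply Integrable.mono' hg
  · apply Continuous.aestronglyMeasurable
    have cA : Continuous (fun k : ℝ => Real.exp k - 1) := by continuity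
    exact (cexpz z).mul
      (Complex.continuous_ofReal.comp (Real.continuous_arctan.comp ((crp (1/2) (by norm_num)).comp cA)))
  · filter_upwards with k
    rw [norm_integrand]
    have h1 : |Real.arctan ((Real.exp k - 1) ^ (1/2:ℝ))| ≤ 2 := by
      have hπ : π ≤ 4 := Real.pi_le_four
      have ha1 := Real.arctan_lt_pi_div_two ((Real.exp k - 1) ^ (1/2:ℝ))
      have ha2 := Real.neg_pi_div_two_lt_arctan ((Real.exp k - 1) ^ (1/2:ℝ))
      rw [abs_le]; constructor <;> linarith
    have h2 : Real.exp (-(k * z.re)) = Real.exp (-z.re * k) := by ring_nf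
    rw [h2, mul_comm]
    exact mul_le_mul_of_nonneg_right h1 (Real.exp_pos _).le |>.trans_eq (by ring)


lemma image_Ioi_sub : (fun k : ℝ => 1 - Real.exp (-k)) '' Ioi 0 = Ioo 0 1 := by
  ext x
  constructor
  · rintro ⟨k, hk, rfl⟩
    have h1 : Real.exp (-k) < 1 := by
      rw [Real.exp_lt_one_iff]; simpa using hk
    have h2 : 0 < Real.exp (-k) := Real.exp_pos _
    exact ⟨by simp only; linarith, by simp only; linarith⟩
  · rintro ⟨hx0, hx1⟩
    refine ⟨-Real.log (1 - x), ?_, ?_⟩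
    · have : Real.log (1 - x) < 0 := Real.log_neg (by linarith) (by linarith)
      simpa using this
    · simp only [neg_neg]
      rw [Real.exp_log (by linarith)]; ring

lemma laplace_rpow (p : ℝ) (hp : 0 ≤ p) {z : ℂ} (hz : p < z.re) :
    IntegrableOn (fun k : ℝ => Complex.exp (-k * z) * ((Real.exp k - 1) ^ p : ℝ)) (Ioi 0) ∧
    ∫ k in Ioi (0:ℝ), Complex.exp (-k * z) * ((Real.exp k - 1) ^ p : ℝ)
      = Complex.Gamma (p+1) * Complex.Gamma (z - p) / Complex.Gamma (z + 1) := by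
  have hz0 : 0 < z.re := lt_of_le_of_lt hp hz
  set u : ℂ := (p:ℂ) + 1 with hu_def
  set v : ℂ := z - p with hv_def
  have hu : 0 < u.re := by simp [hu_def]; linarith
  have hv : 0 < v.re := by simp [hv_def]; linarith
  set g : ℝ → ℂ := fun x => (x:ℂ) ^ (u - 1) * (1 - (x:ℂ)) ^ (v - 1) with hg_def
  -- change of variables data
  have hderiv : ∀ k ∈ Ioi (0:ℝ), HasDerivWithinAt (fun k : ℝ => 1 - Real.exp (-k))
      (Real.exp (-k)) (Ioi 0) k := by
    intro k _
    have : HasDerivAt (fun k : ℝ => 1 - Real.exp (-k)) (Real.exp (-k)) k := by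
      simpa using ((hasDerivAt_neg k).exp).const_sub 1
    exact this.hasDerivWithinAt
  have hinj : InjOn (fun k : ℝ => 1 - Real.exp (-k)) (Ioi 0) := by
    intro a _ b _ h
    simp only [sub_right_inj, Real.exp_eq_exp, neg_inj] at h
    exact h
  -- pointwise identity
  have heq : ∀ k ∈ Ioi (0:ℝ), |Real.exp (-k)| • g (1 - Real.exp (-k))
      = Complex.exp (-k * z) * ((Real.exp k - 1) ^ p : ℝ) := by
    intro k hk
    have hk' : (0:ℝ) < k := hk
    have he1 : (1:ℝ) < Real.exp k := by
      rw [show (1:ℝ) = Real.exp 0 by simp]; exact Real.exp_lt_exp.mpr hk'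
    have hpos : 0 < 1 - Real.exp (-k) := by
      have : Real.exp (-k) < 1 := by rw [Real.exp_lt_one_iff]; linarith
      linarith
    have h1 : ((1 - Real.exp (-k) : ℝ) : ℂ) ^ (u - 1) = (((1 - Real.exp (-k)) ^ p : ℝ) : ℂ) := by
      rw [hu_def]
      rw [show (p:ℂ) + 1 - 1 = (p:ℂ) by ring]
      rw [← Complex.ofReal_cpow hpos.le]
    have h2 : (1 - ((1 - Real.exp (-k) : ℝ) : ℂ)) = Complex.exp (-(k:ℂ)) := by
      push_cast [Complex.ofReal_exp]
      ring
    have h3 : Complex.exp (-(k:ℂ)) ^ (v - 1) = Complex.exp (-(k:ℂ) * (v - 1)) := by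
      rw [Complex.cpow_def_of_ne_zero (Complex.exp_ne_zero _),
        Complex.log_exp (by simp [Real.pi_pos]) (by simp [Real.pi_pos.le])]
    have h4 : ((Real.exp k - 1) ^ p : ℝ) = Real.exp (k * p) * (1 - Real.exp (-k)) ^ p := by
      rw [show Real.exp k - 1 = Real.exp k * (1 - Real.exp (-k)) by
          rw [mul_sub, mul_one, ← Real.exp_add]; simp,
        Real.mul_rpow (Real.exp_pos k).le hpos.le,
        Real.rpow_def_of_pos (Real.exp_pos k), Real.log_exp]
    have h2' : ((Real.exp (-k) : ℝ) : ℂ) = Complex.exp (-(k:ℂ)) := by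
      rw [Complex.ofReal_exp]; push_cast; ring_nf
    rw [hg_def]
    simp only [h2' ▸ h2, h1, h3, abs_of_pos (Real.exp_pos (-k)), h4]
    push_cast [Complex.ofReal_exp]
    rw [Complex.real_smul]
    have h5 : Complex.exp (-(k:ℂ)) * Complex.exp (-(k:ℂ) * (v-1))
        = Complex.exp (-(k:ℂ)*z) * Complex.exp ((k:ℂ)*(p:ℂ)) := by
      rw [← Complex.exp_add, ← Complex.exp_add, hv_def]; ring_nf
    rw [h3, h2']
    linear_combination (((1 - Real.exp (-k)) ^ p : ℝ) : ℂ) * h5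
  have hbeta_int : IntegrableOn g (Ioo 0 1) := by
    have h := Complex.betaIntegral_convergent hu hv
    rw [intervalIntegrable_iff_integrableOn_Ioc_of_le (by norm_num : (0:ℝ) ≤ 1)] at h
    exact h.mono_set Ioo_subset_Ioc_self
  have himg := image_Ioi_sub
  have hint : IntegrableOn (fun k : ℝ => |Real.exp (-k)| • g (1 - Real.exp (-k))) (Ioi 0) := by
    rw [← integrableOn_image_iff_integrableOn_abs_deriv_smul measurableSet_Ioi hderiv hinj g]
    rw [himg]; exact hbeta_int
  constructor
  · exact hint.congr_fun heq measurableSet_Ioi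
  · have e1 : ∫ k in Ioi (0:ℝ), Complex.exp (-k * z) * ((Real.exp k - 1) ^ p : ℝ)
        = ∫ k in Ioi (0:ℝ), |Real.exp (-k)| • g (1 - Real.exp (-k)) :=
      setIntegral_congr_fun measurableSet_Ioi fun k hk => (heq k hk).symm
    rw [e1, ← integral_image_eq_integral_abs_deriv_smul measurableSet_Ioi hderiv hinj g, himg]
    have e2 : ∫ x in Ioo (0:ℝ) 1, g x = Complex.betaIntegral u v := by
      rw [Complex.betaIntegral, intervalIntegral.integral_of_le (by norm_num : (0:ℝ) ≤ 1),
        MeasureTheory.integral_Ioc_eq_integral_Ioo]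
    rw [e2]
    have huv : u + v = z + 1 := by rw [hu_def, hv_def]; ring
    have hne : Complex.Gamma (z+1) ≠ 0 := Complex.Gamma_ne_zero_of_re_pos (by simp; linarith)
    have hb := Complex.Gamma_mul_Gamma_eq_betaIntegral hu hv
    rw [huv] at hb
    rw [eq_div_iff hne, mul_comm (Complex.betaIntegral u v)]
    exact hb.symm

lemma pow_key (x : ℝ) (hx : 0 < x) :
    (3/2) * x ^ (3/2:ℝ) + (9/2) * x ^ (1/2:ℝ)
      = (x+1) * (3/2) * x ^ (1/2:ℝ) + 6 * ((x+1) * (1/2) * x ^ (-(1/2):ℝ))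
        - 6 * (1 / (1 + (x ^ (1/2:ℝ)) ^ 2) * ((x+1) * (1/2) * x ^ (-(1/2):ℝ))) := by
  have hsq : ((x:ℝ) ^ (1/2:ℝ)) ^ 2 = x := by
    rw [← Real.rpow_natCast (x ^ (1/2:ℝ)) 2, ← Real.rpow_mul hx.le]
    norm_num
  have hm1 : x ^ (-(1/2):ℝ) * x = x ^ (1/2:ℝ) := by
    have h : x ^ (-(1/2):ℝ) * x ^ (1:ℝ) = x ^ (1/2:ℝ) := by
      rw [← Real.rpow_add hx]; norm_num
    simpa [Real.rpow_one] using h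
  have hm2 : x ^ (1/2:ℝ) * x = x ^ (3/2:ℝ) := by
    have h : x ^ (1/2:ℝ) * x ^ (1:ℝ) = x ^ (3/2:ℝ) := by
      rw [← Real.rpow_add hx]; norm_num
    simpa [Real.rpow_one] using h
  have hden : (1:ℝ) + x ≠ 0 := by linarith
  have h3 : 1 / (1 + x) * ((x+1) * (1/2) * x ^ (-(1/2):ℝ)) = (1/2) * x ^ (-(1/2):ℝ) := by
    field_simp; ring
  rw [hsq, h3]
  linear_combination (-(3:ℝ)/2) * hm2 - 3 * hm1

lemma wAux_hasDerivAt {k : ℝ} (hk : 0 < k) :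
    HasDerivAt wAux
      ((3/2) * (Real.exp k - 1) ^ (3/2:ℝ) + (9/2) * (Real.exp k - 1) ^ (1/2:ℝ)) k := by
  have hx : 0 < Real.exp k - 1 := by
    have : (1:ℝ) < Real.exp k := by
      rw [show (1:ℝ) = Real.exp 0 by simp]; exact Real.exp_lt_exp.mpr hk
    linarith
  have hA : HasDerivAt (fun k : ℝ => Real.exp k - 1) (Real.exp k) k :=
    (Real.hasDerivAt_exp k).sub_const 1
  have h1 := hA.rpow_const (p := 3/2) (Or.inl hx.ne')
  have h2 := hA.rpow_const (p := 1/2) (Or.inl hx.ne')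
  have h3 := h2.arctan
  have total := (h1.add (h2.const_mul 6)).sub (h3.const_mul 6)
  convert total using 1
  · rfl
  · rfl
  · rfl
  have e32 : (3/2 - 1 : ℝ) = 1/2 := by norm_num
  have e12 : (1/2 - 1 : ℝ) = -(1/2) := by norm_num
  rw [e32, e12]
  have key := pow_key (Real.exp k - 1) hx
  rw [show Real.exp k - 1 + 1 = Real.exp k by ring] at key
  linarith [key]

theorem laplace_transform_w (z : ℂ) (hz : 3/2 < z.re) :
    ∫ k in Ioi (0:ℝ), Complex.exp (-k * z) * (w k : ℝ)
      = 9 * Real.sqrt π * (Complex.Gamma (z + 1/2) / Complex.Gamma (z + 1))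
          * ((z - 1) / (z * (2*z - 1) * (2*z - 3))) := by
  have hz0 : (0:ℝ) < z.re := by linarith
  obtain ⟨hi32, he32⟩ := laplace_rpow (3/2) (by norm_num) (z := z) (by linarith)
  obtain ⟨hi12, he12⟩ := laplace_rpow (1/2) (by norm_num) (z := z) (by linarith)
  have hu : ∀ k ∈ Ioi (0:ℝ), HasDerivAt (fun k : ℝ => Complex.exp (-k * z))
      (-z * Complex.exp (-k * z)) k := by
    intro k _
    have h : HasDerivAt (fun y : ℂ => Complex.exp (-y * z))
        (-z * Complex.exp (-(k:ℂ) * z)) ((k:ℝ):ℂ) := by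
      have h2 := (((hasDerivAt_id ((k:ℝ):ℂ)).neg.mul_const z)).cexp
      convert h2 using 1
      · rfl
      · rfl
      simp; ring
    exact h.comp_ofReal
  have hv : ∀ k ∈ Ioi (0:ℝ), HasDerivAt (fun k : ℝ => ((wAux k : ℝ) : ℂ))
      ((((3:ℝ)/2) * (Real.exp k - 1) ^ (3/2:ℝ) + ((9:ℝ)/2) * (Real.exp k - 1) ^ (1/2:ℝ) : ℝ) : ℂ) k :=
    fun k hk => (wAux_hasDerivAt hk).ofReal_comp
  have huv' : IntegrableOn (fun k : ℝ => Complex.exp (-k*z) *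
      ((((3:ℝ)/2) * (Real.exp k - 1) ^ (3/2:ℝ) + ((9:ℝ)/2) * (Real.exp k - 1) ^ (1/2:ℝ) : ℝ) : ℂ))
      (Ioi 0) := by
    have h := (hi32.const_mul ((3:ℂ)/2)).add (hi12.const_mul ((9:ℂ)/2))
    apply MeasureTheory.IntegrableOn.congr_fun h ?_ measurableSet_Ioi
    intro k _
    simp only [Pi.add_apply, Pi.sub_apply]
    push_cast
    ring
  have huv : IntegrableOn (fun k : ℝ => Complex.exp (-k*z) * ((wAux k : ℝ) : ℂ)) (Ioi 0) := by
    have h := (hi32.add (hi12.const_mul ((6:ℂ)))).sub ((harct z hz0).const_mul (6:ℂ))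
    apply MeasureTheory.IntegrableOn.congr_fun h ?_ measurableSet_Ioi
    intro k _
    simp only [Pi.add_apply, Pi.sub_apply, wAux]
    push_cast
    ring
  have hu'v : IntegrableOn (fun k : ℝ => (-z * Complex.exp (-k*z)) * ((wAux k : ℝ) : ℂ)) (Ioi 0) := by
    have h := huv.const_mul (-z)
    apply MeasureTheory.IntegrableOn.congr_fun h ?_ measurableSet_Ioi
    intro k _; simp only []; ring
  have h_zero : Tendsto (fun k : ℝ => Complex.exp (-k*z) * ((wAux k : ℝ) : ℂ))
      (𝓝[>] (0:ℝ)) (𝓝 0) := by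
    have hc : Continuous (fun k : ℝ => Complex.exp (-k*z) * ((wAux k : ℝ) : ℂ)) :=
      (cexpz z).mul (Complex.continuous_ofReal.comp cwAux)
    have h := (hc.tendsto 0).mono_left (nhdsWithin_le_nhds : 𝓝[>] (0:ℝ) ≤ 𝓝 0)
    simpa [wAux_zero] using h
  have h_infty : Tendsto (fun k : ℝ => Complex.exp (-k*z) * ((wAux k : ℝ) : ℂ)) atTop (𝓝 0) := by
    apply squeeze_zero_norm' (a := fun k : ℝ =>
      Real.exp ((3/2 - z.re)*k) + 6*Real.exp ((1/2 - z.re)*k) + 12*Real.exp (-z.re * k))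
    · filter_upwards [eventually_ge_atTop (0:ℝ)] with k hk
      rw [norm_integrand]
      have hb := wAux_bound hk
      have hE : (0:ℝ) < Real.exp (-(k*z.re)) := Real.exp_pos _
      refine (mul_le_mul_of_nonneg_left hb hE.le).trans_eq ?_
      have e1 : Real.exp (-(k*z.re)) * Real.exp (k*(3/2)) = Real.exp ((3/2-z.re)*k) := by
        rw [← Real.exp_add]; ring_nf
      have e2 : Real.exp (-(k*z.re)) * Real.exp (k*(1/2)) = Real.exp ((1/2-z.re)*k) := by
        rw [← Real.exp_add]; ring_nf
      have e3 : Real.exp (-(k*z.re)) = Real.exp (-z.re*k) := by ring_nf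
      linear_combination e1 + 6*e2 + 12*e3
    · have t1 : Tendsto (fun k:ℝ => Real.exp ((3/2 - z.re)*k)) atTop (𝓝 0) :=
        Real.tendsto_exp_atBot.comp (tendsto_id.const_mul_atTop_of_neg (by linarith))
      have t2 : Tendsto (fun k:ℝ => Real.exp ((1/2 - z.re)*k)) atTop (𝓝 0) :=
        Real.tendsto_exp_atBot.comp (tendsto_id.const_mul_atTop_of_neg (by linarith))
      have t3 : Tendsto (fun k:ℝ => Real.exp (-z.re*k)) atTop (𝓝 0) :=
        Real.tendsto_exp_atBot.comp (tendsto_id.const_mul_atTop_of_neg (by linarith))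
      simpa using (t1.add (t2.const_mul 6)).add (t3.const_mul 12)
  have ibp := integral_Ioi_mul_deriv_eq_deriv_mul hu hv huv' hu'v h_zero h_infty
  have hzne : z ≠ 0 := fun h => by simp [h] at hz0
  have eA : ∫ k in Ioi (0:ℝ), Complex.exp (-k*z) *
      ((((3:ℝ)/2) * (Real.exp k - 1) ^ (3/2:ℝ) + ((9:ℝ)/2) * (Real.exp k - 1) ^ (1/2:ℝ) : ℝ) : ℂ)
      = (3/2) * (Complex.Gamma (((3:ℝ)/2 : ℝ) + 1) * Complex.Gamma (z - ((3:ℝ)/2 : ℝ)) / Complex.Gamma (z+1))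
        + (9/2) * (Complex.Gamma (((1:ℝ)/2 : ℝ) + 1) * Complex.Gamma (z - ((1:ℝ)/2 : ℝ)) / Complex.Gamma (z+1)) := by
    rw [← he32, ← he12, ← integral_const_mul, ← integral_const_mul,
      ← integral_add (hi32.const_mul _) (hi12.const_mul _)]
    refine setIntegral_congr_fun measurableSet_Ioi fun k _ => ?_
    push_cast; ring
  have eB : ∫ k in Ioi (0:ℝ), -z * Complex.exp (-k*z) * ((wAux k : ℝ):ℂ)
      = -z * ∫ k in Ioi (0:ℝ), Complex.exp (-k*z) * ((wAux k : ℝ):ℂ) := by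
    rw [← integral_const_mul]
    refine setIntegral_congr_fun measurableSet_Ioi fun k _ => by ring
  rw [eA, eB] at ibp
  have hmain : ∫ k in Ioi (0:ℝ), Complex.exp (-k*z) * ((wAux k : ℝ):ℂ)
      = z⁻¹ * ((3/2) * (Complex.Gamma (((3:ℝ)/2 : ℝ) + 1) * Complex.Gamma (z - ((3:ℝ)/2 : ℝ)) / Complex.Gamma (z+1))
        + (9/2) * (Complex.Gamma (((1:ℝ)/2 : ℝ) + 1) * Complex.Gamma (z - ((1:ℝ)/2 : ℝ)) / Complex.Gamma (z+1))) := by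
    have h1 : (3/2 : ℂ) * (Complex.Gamma (((3:ℝ)/2 : ℝ) + 1) * Complex.Gamma (z - ((3:ℝ)/2 : ℝ)) / Complex.Gamma (z+1))
        + (9/2) * (Complex.Gamma (((1:ℝ)/2 : ℝ) + 1) * Complex.Gamma (z - ((1:ℝ)/2 : ℝ)) / Complex.Gamma (z+1))
        = z * ∫ k in Ioi (0:ℝ), Complex.exp (-k*z) * ((wAux k : ℝ):ℂ) := by
      linear_combination ibp
    rw [h1]
    field_simp [hzne]
    congr 1; funext k; ring_nf
  have hw : ∫ k in Ioi (0:ℝ), Complex.exp (-k * z) * (w k : ℝ)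
      = ∫ k in Ioi (0:ℝ), Complex.exp (-k*z) * ((wAux k : ℝ):ℂ) := by
    refine setIntegral_congr_fun measurableSet_Ioi fun k hk => ?_
    have : 0 < k := hk
    simp [w, wAux, this]
  rw [hw, hmain]
  -- Gamma computations
  have g12 : Complex.Gamma (1/2 : ℂ) = (Real.sqrt π : ℂ) := by
    rw [show (1/2:ℂ) = ((1/2:ℝ):ℂ) by norm_num, Complex.Gamma_ofReal, Real.Gamma_one_half_eq]
  have gval2 : Complex.Gamma ((1/2:ℂ)+1) = (Real.sqrt π:ℂ)/2 := by
    rw [Complex.Gamma_add_one _ (by norm_num), g12]; ring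
  have gval1 : Complex.Gamma ((3/2:ℂ)+1) = 3*(Real.sqrt π:ℂ)/4 := by
    rw [Complex.Gamma_add_one _ (by norm_num : (3/2:ℂ) ≠ 0),
      show (3/2:ℂ) = (1/2:ℂ)+1 by norm_num, Complex.Gamma_add_one _ (by norm_num), g12]
    ring
  have hne1 : z - 3/2 ≠ 0 := by
    intro h
    have h2 : (z - 3/2 : ℂ).re = 0 := by rw [h]; simp
    rw [Complex.sub_re] at h2
    norm_num at h2
    linarith
  have hne2 : z - 1/2 ≠ 0 := by
    intro h
    have h2 : (z - 1/2 : ℂ).re = 0 := by rw [h]; simp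
    rw [Complex.sub_re] at h2
    norm_num at h2
    linarith
  have h2z1 : 2*z - 1 ≠ 0 := fun h => hne2 (by linear_combination h/2)
  have h2z3 : 2*z - 3 ≠ 0 := fun h => hne1 (by linear_combination h/2)
  have hΓ : Complex.Gamma (z+1) ≠ 0 :=
    Complex.Gamma_ne_zero_of_re_pos (by rw [Complex.add_re]; norm_num; linarith)
  have hr1 : Complex.Gamma (z - 1/2) = (z - 3/2) * Complex.Gamma (z - 3/2) := by
    rw [show z - 1/2 = (z - 3/2) + 1 by ring, Complex.Gamma_add_one _ hne1]
  have hr2 : Complex.Gamma (z + 1/2) = (z - 1/2) * ((z - 3/2) * Complex.Gamma (z - 3/2)) := by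
    rw [show z + 1/2 = (z - 1/2) + 1 by ring, Complex.Gamma_add_one _ hne2, hr1]
  have c32 : (((3:ℝ)/2 : ℝ) : ℂ) = (3/2 : ℂ) := by norm_num
  have c12 : (((1:ℝ)/2 : ℝ) : ℂ) = (1/2 : ℂ) := by norm_num
  rw [c32, c12, gval1, gval2, hr1, hr2, inv_mul_eq_div, div_eq_iff hzne]
  field_simp
  ring
end

section
/- For every complex z with Re z > -1/4, one has |z + 1/2|^{-1/2} ≤ |Γ(z + 1/2)/Γ(z + 1)| ≤ |z + 1|^{1/2}/|z + 1/2|. -/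
open Complex

open Filter Real Topology


lemma perPeriod (u t : ℝ) (hu : 1/4 ≤ u) (ht : 0 ≤ t) :
    ((u^2+t)/2 - (u+1/4)^2) / (2*((u+1/2)^2+t)^2)
      ≤ (1/4)*((u+1)/((u+1)^2+t) - u/(u^2+t))
        + 1/(16*t+16*u^2+4*u) - 1/(16*t+16*(u+1)^2+4*(u+1)) := by
  obtain ⟨v, hv, rfl⟩ : ∃ v, 0 ≤ v ∧ u = v + 1/4 := ⟨u - 1/4, by linarith, by ring⟩
  have d1 : (0:ℝ) < (v+1/4)^2+t := by positivity
  have d2 : (0:ℝ) < ((v+1/4)+1)^2+t := by positivity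
  have d3 : (0:ℝ) < ((v+1/4)+1/2)^2+t := by positivity
  have d4 : (0:ℝ) < 16*t+16*(v+1/4)^2+4*(v+1/4) := by positivity
  have d5 : (0:ℝ) < 16*t+16*((v+1/4)+1)^2+4*((v+1/4)+1) := by positivity
  rw [← sub_nonneg]
  have key : (1/4)*(((v+1/4)+1)/(((v+1/4)+1)^2+t) - (v+1/4)/((v+1/4)^2+t))
        + 1/(16*t+16*(v+1/4)^2+4*(v+1/4)) - 1/(16*t+16*((v+1/4)+1)^2+4*((v+1/4)+1))
      - ((((v+1/4))^2+t)/2 - ((v+1/4)+1/4)^2) / (2*(((v+1/4)+1/2)^2+t)^2)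
      = ((375/8192 : ℝ) + (4853/128 : ℝ)*t + (2041/8 : ℝ)*t^2 + (132 : ℝ)*t^3 + (8 : ℝ)*t^4 + (1925/1024 : ℝ)*v + (11799/32 : ℝ)*v*t + (2701/2 : ℝ)*v*t^2 + (584 : ℝ)*v*t^3 + (64 : ℝ)*v*t^4 + (6235/256 : ℝ)*v^2 + (12403/8 : ℝ)*v^2*t + (2825 : ℝ)*v^2*t^2 + (672 : ℝ)*v^2*t^3 + (4897/32 : ℝ)*v^3 + (3522 : ℝ)*v^3*t + (3064 : ℝ)*v^3*t^2 + (256 : ℝ)*v^3*t^3 + (537 : ℝ)*v^4 + (4598 : ℝ)*v^4*t + (1712 : ℝ)*v^4*t^2 + (2223/2 : ℝ)*v^5 + (3480 : ℝ)*v^5*t + (384 : ℝ)*v^5*t^2 + (1377 : ℝ)*v^6 + (1440 : ℝ)*v^6*t + (1000 : ℝ)*v^7 + (256 : ℝ)*v^7*t + (392 : ℝ)*v^8 + (64 : ℝ)*v^9) /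
        ((2*(((v+1/4)+1/2)^2+t)^2) * ((((v+1/4)+1)^2+t) * (((v+1/4))^2+t)
          * (16*t+16*(v+1/4)^2+4*(v+1/4)) * (16*t+16*((v+1/4)+1)^2+4*((v+1/4)+1)))) := by
    field_simp
    ring
  rw [key]
  positivity


lemma stepLog (u t a b m : ℝ) (hu : 1/4 ≤ u) (ht : 0 ≤ t)
    (ha : 0 < a) (hb : 0 < b) (hm : 0 < m)
    (ha2 : a^2 = u^2+t) (hb2 : b^2 = (u+1)^2+t) (hm2 : m^2 = (u+1/2)^2+t)
    (hP : ((u^2+t)/2 - (u+1/4)^2) / (2*((u+1/2)^2+t)^2)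
      ≤ (1/4)*((u+1)/((u+1)^2+t) - u/(u^2+t))
        + 1/(16*t+16*u^2+4*u) - 1/(16*t+16*(u+1)^2+4*(u+1))) :
    Real.log a + Real.log b - 2*Real.log m
      ≤ (1/4)*((u+1)/((u+1)^2+t) - u/(u^2+t))
        + 1/(16*t+16*u^2+4*u) - 1/(16*t+16*(u+1)^2+4*(u+1)) := by
  have h1 : Real.log a + Real.log b - 2*Real.log m = Real.log (a*b/m^2) := by
    rw [Real.log_div (by positivity) (by positivity), Real.log_mul ha.ne' hb.ne', Real.log_pow]
    push_cast; ring
  have h2 : Real.log (a*b/m^2) ≤ a*b/m^2 - 1 :=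
    Real.log_le_sub_one_of_pos (by positivity)
  have hab2 : (a*b)^2 = (u^2+t)*((u+1)^2+t) := by rw [mul_pow, ha2, hb2]
  have h4 : a*b - m^2 ≤ ((u^2+t)/2 - (u+1/4)^2)/(2*m^2) := by
    rw [le_div_iff₀ (by positivity)]
    nlinarith [sq_nonneg (a*b - m^2)]
  have h5 : a*b/m^2 - 1 ≤ ((u^2+t)/2 - (u+1/4)^2) / (2*((u+1/2)^2+t)^2) := by
    have hm2' : (m^2)^2 = ((u+1/2)^2+t)^2 := by rw [hm2]
    calc a*b/m^2 - 1 = (a*b - m^2)/m^2 := by field_simp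
    _ ≤ (((u^2+t)/2 - (u+1/4)^2)/(2*m^2))/m^2 := by
        apply div_le_div_of_nonneg_right h4 (by positivity) |>.trans_eq rfl
    _ = ((u^2+t)/2 - (u+1/4)^2) / (2*((u+1/2)^2+t)^2) := by
        rw [div_div, ← hm2']; ring_nf
  linarith [h2.trans h5]


-- termwise: (X+j)*|w+1/2+j| ≤ (X+1/2+j)*|w+j| for X = w.re > 0
lemma termwise (w : ℂ) (hw : 0 < w.re) (j : ℕ) :
    (w.re + j) * ‖w + 1/2 + j‖ ≤ (w.re + 1/2 + j) * ‖w + j‖ := by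
  have h1 : (0:ℝ) ≤ w.re + j := by positivity
  have h2 : (0:ℝ) ≤ w.re + 1/2 + j := by positivity
  apply le_of_pow_le_pow_left₀ two_ne_zero (by positivity)
  rw [mul_pow, mul_pow, Complex.sq_norm, Complex.sq_norm, Complex.normSq_apply, Complex.normSq_apply]
  have e1 : (w + 1/2 + j).re = w.re + 1/2 + j := by simp
  have e2 : (w + 1/2 + j).im = w.im := by simp
  have e3 : (w + j).re = w.re + j := by simp
  have e4 : (w + j).im = w.im := by simp
  rw [e1, e2, e3, e4]
  nlinarith [sq_nonneg w.im, sq_nonneg (w.re + j), sq_nonneg (w.re+1/2+j), mul_nonneg h1 h2]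

lemma seq_ineq (w : ℂ) (hw : 0 < w.re) (n : ℕ) :
    Real.GammaSeq (w.re + 1/2) n * ‖Complex.GammaSeq w n‖
      ≤ Real.GammaSeq w.re n * ‖Complex.GammaSeq (w + 1/2) n‖ := by
  have habs : ∀ (v : ℂ), 0 < v.re → ‖Complex.GammaSeq v n‖
      = (n:ℝ) ^ v.re * n.factorial / ∏ j ∈ Finset.range (n+1), ‖v + j‖ := by
    intro v hv
    rw [Complex.GammaSeq, norm_div, norm_mul, norm_prod]
    congr 2
    · rcases Nat.eq_zero_or_pos n with h | h
      · subst h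
        rw [Nat.cast_zero, Complex.zero_cpow (by intro h; rw [h] at hv; simp at hv)]
        simp [Real.zero_rpow hv.ne']
      · exact Complex.norm_cpow_eq_rpow_re_of_pos (by exact_mod_cast h) v
    · simp
  have hw2 : 0 < (w + 1/2).re := by simp; linarith
  rw [habs w hw, habs _ hw2]
  have e5 : (w + 1/2).re = w.re + 1/2 := by simp
  rw [e5, Real.GammaSeq, Real.GammaSeq]
  rw [div_mul_div_comm, div_mul_div_comm]
  rw [show (n:ℝ) ^ (w.re + 1/2) * n.factorial * ((n:ℝ) ^ w.re * n.factorial)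
      = (n:ℝ) ^ w.re * n.factorial * ((n:ℝ) ^ (w.re + 1/2) * n.factorial) by ring]
  have hne : ∀ j : ℕ, w + 1/2 + (j:ℂ) ≠ 0 := by
    intro j h
    have := congrArg Complex.re h
    simp at this
    linarith [this]
  apply div_le_div_of_nonneg_left (by positivity) ?_ ?_
  · exact mul_pos (Finset.prod_pos fun j _ => by positivity)
      (Finset.prod_pos fun j _ => norm_pos_iff.mpr (hne j))
  · rw [← Finset.prod_mul_distrib, ← Finset.prod_mul_distrib]
    exact Finset.prod_le_prod (fun j _ => by positivity) (fun j _ => termwise w hw j)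


lemma abs_gamma_ratio (w : ℂ) (hw : 0 < w.re)
    (hseq : ∀ n : ℕ, Real.GammaSeq (w.re + 1/2) n * ‖Complex.GammaSeq w n‖
      ≤ Real.GammaSeq w.re n * ‖Complex.GammaSeq (w + 1/2) n‖) :
    Real.Gamma (w.re + 1/2) * ‖Complex.Gamma w‖
      ≤ Real.Gamma w.re * ‖Complex.Gamma (w + 1/2)‖ := by
  have habs : ∀ v : ℂ, Tendsto (fun n => ‖Complex.GammaSeq v n‖) atTop
      (𝓝 (‖Complex.Gamma v‖)) := by
    intro v
    have := (Complex.GammaSeq_tendsto_Gamma v).norm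
    exact this
  exact le_of_tendsto_of_tendsto' ((Real.GammaSeq_tendsto_Gamma _).mul (habs w))
    ((Real.GammaSeq_tendsto_Gamma _).mul (habs (w + 1/2))) hseq

lemma realGamma_sq (X : ℝ) (hX : 0 < X) :
    Real.Gamma (X+1/2)^2 * X ≤ Real.Gamma (X+1)^2 := by
  have h := Real.Gamma_mul_add_mul_le_rpow_Gamma_mul_rpow_Gamma (s := X) (t := X+1)
    hX (by linarith) (by norm_num : (0:ℝ) < 1/2) (by norm_num : (0:ℝ) < 1/2) (by norm_num)
  have e : 1/2*X + 1/2*(X+1) = X + 1/2 := by ring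
  rw [e] at h
  have hg0 : 0 < Real.Gamma X := Real.Gamma_pos_of_pos hX
  have hg1 : 0 < Real.Gamma (X+1) := Real.Gamma_pos_of_pos (by linarith)
  have hgh : 0 < Real.Gamma (X+1/2) := Real.Gamma_pos_of_pos (by linarith)
  have hr0 : (Real.Gamma X ^ ((1/2):ℝ))^2 = Real.Gamma X := by
    rw [← Real.rpow_natCast (Real.Gamma X ^ ((1/2):ℝ)) 2, ← Real.rpow_mul hg0.le]
    norm_num
  have hr1 : (Real.Gamma (X+1) ^ ((1/2):ℝ))^2 = Real.Gamma (X+1) := by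
    rw [← Real.rpow_natCast (Real.Gamma (X+1) ^ ((1/2):ℝ)) 2, ← Real.rpow_mul hg1.le]
    norm_num
  have hsq : Real.Gamma (X+1/2)^2 ≤ Real.Gamma X * Real.Gamma (X+1) := by
    have h2 : Real.Gamma (X+1/2)^2 ≤ (Real.Gamma X ^ ((1/2):ℝ) * Real.Gamma (X+1) ^ ((1/2):ℝ))^2 :=
      pow_le_pow_left₀ hgh.le h 2
    calc Real.Gamma (X+1/2)^2 ≤ (Real.Gamma X ^ ((1/2):ℝ) * Real.Gamma (X+1) ^ ((1/2):ℝ))^2 := h2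
    _ = Real.Gamma X * Real.Gamma (X+1) := by rw [mul_pow, hr0, hr1]
  have hadd : Real.Gamma (X+1) = X * Real.Gamma X := Real.Gamma_add_one hX.ne'
  calc Real.Gamma (X+1/2)^2 * X ≤ (Real.Gamma X * Real.Gamma (X+1)) * X := by nlinarith
  _ = Real.Gamma (X+1)^2 := by rw [hadd]; ring


section Main
variable (s : ℂ)

set_option maxHeartbeats 2000000 in
lemma main_ineq (hs : 1/4 ≤ s.re) :
    ‖Complex.Gamma (s+1/2)‖^2 ≤ ‖s‖ * ‖Complex.Gamma s‖^2 := by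
  obtain ⟨σ, hσeq⟩ : ∃ x : ℝ, x = s.re := ⟨s.re, rfl⟩
  obtain ⟨t, hteq⟩ : ∃ x : ℝ, x = s.im^2 := ⟨s.im^2, rfl⟩
  rw [← hσeq] at hs
  have ht : 0 ≤ t := by rw [hteq]; exact sq_nonneg _
  -- basic re/im computations
  have hre : ∀ n : ℕ, (s + n).re = σ + n := fun n => by rw [hσeq]; simp
  have him : ∀ n : ℕ, (s + n).im = s.im := fun n => by simp
  have hre2 : ∀ n : ℕ, (s + n + 1/2).re = σ + n + 1/2 := fun n => by
    rw [hσeq]; simp [Complex.add_re]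
  have him2 : ∀ n : ℕ, (s + n + 1/2).im = s.im := fun n => by
    simp [Complex.add_im]
  have habs2 : ∀ v : ℂ, ‖v‖ ^ 2 = v.re^2 + v.im^2 := fun v => by
    rw [Complex.sq_norm, Complex.normSq_apply]; ring
  -- nonvanishing
  have hXpos : ∀ n : ℕ, (0:ℝ) < σ + n := fun n => by
    have : (0:ℝ) ≤ n := Nat.cast_nonneg n
    linarith
  have hne : ∀ n : ℕ, s + n ≠ 0 := fun n h => by
    have := congrArg Complex.re h
    rw [hre n] at this
    exact (hXpos n).ne' (by simpa using this)
  have hne2 : ∀ n : ℕ, s + n + 1/2 ≠ 0 := fun n h => by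
    have := congrArg Complex.re h
    rw [hre2 n] at this
    simp at this
    linarith [hXpos n]
  have hapos : ∀ n : ℕ, 0 < ‖s + n‖ :=
    fun n => norm_pos_iff.mpr (hne n)
  have hmpos : ∀ n : ℕ, 0 < ‖s + n + 1/2‖ :=
    fun n => norm_pos_iff.mpr (hne2 n)
  have hGpos : ∀ n : ℕ, 0 < ‖Complex.Gamma (s + n)‖ := fun n =>
    norm_pos_iff.mpr (Complex.Gamma_ne_zero_of_re_pos (by rw [hre n]; exact hXpos n))
  have hGhpos : ∀ n : ℕ, 0 < ‖Complex.Gamma (s + n + 1/2)‖ := fun n =>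
    norm_pos_iff.mpr (Complex.Gamma_ne_zero_of_re_pos
      (by rw [hre2 n]; linarith [hXpos n]))
  -- squared abs values
  have ha2 : ∀ n : ℕ, ‖s + n‖ ^ 2 = (σ + n)^2 + t := fun n => by
    rw [habs2, hre n, him n, ← hteq]
  have hm2 : ∀ n : ℕ, ‖s + n + 1/2‖ ^ 2 = (σ + n + 1/2)^2 + t := fun n => by
    rw [habs2, hre2 n, him2 n, ← hteq]
  -- the quantity F
  obtain ⟨F, hFdef⟩ : ∃ F : ℕ → ℝ, F = fun n : ℕ =>
      2*Real.log (‖Complex.Gamma (s + n + 1/2)‖)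
      - Real.log (‖s + n‖) - 2*Real.log (‖Complex.Gamma (s + n)‖) :=
    ⟨_, rfl⟩
  -- functional equations
  have hfun1 : ∀ n : ℕ, Complex.Gamma (s + (n+1 : ℕ)) = (s + n) * Complex.Gamma (s + n) := by
    intro n
    have e : s + ((n+1 : ℕ) : ℂ) = (s + n) + 1 := by push_cast; ring
    rw [e, Complex.Gamma_add_one _ (hne n)]
  have hfun2 : ∀ n : ℕ, Complex.Gamma (s + (n+1 : ℕ) + 1/2)
      = (s + n + 1/2) * Complex.Gamma (s + n + 1/2) := by
    intro n
    have e : s + ((n+1 : ℕ) : ℂ) + 1/2 = (s + n + 1/2) + 1 := by push_cast; ring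
    rw [e, Complex.Gamma_add_one _ (hne2 n)]
  -- step inequality
  have hstep : ∀ n : ℕ, F n ≤ F (n+1)
      + ((1/4)*((σ+n+1)/((σ+n+1)^2+t) - (σ+n)/((σ+n)^2+t))
        + (1/(16*t+16*(σ+n)^2+4*(σ+n)) - 1/(16*t+16*(σ+n+1)^2+4*(σ+n+1)))) := by
    intro n
    have hdiff : F n - F (n+1) = Real.log (‖s + n‖)
        + Real.log (‖s + (n+1:ℕ)‖) - 2*Real.log (‖s + n + 1/2‖) := by
      rw [hFdef]
      simp only
      rw [hfun1 n, hfun2 n, norm_mul, norm_mul,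
        Real.log_mul (hmpos n).ne' (hGhpos n).ne', Real.log_mul (hapos n).ne' (hGpos n).ne']
      ring
    have hb2 : ‖s + (n+1:ℕ)‖ ^ 2 = ((σ+n)+1)^2 + t := by
      rw [ha2 (n+1)]; push_cast; ring_nf
    have hm2' : ‖s + n + 1/2‖ ^ 2 = ((σ+n)+1/2)^2 + t := by
      rw [hm2 n]
    have hP := perPeriod (σ+n) t (by have hn : (0:ℝ) ≤ (n:ℝ) := Nat.cast_nonneg n; linarith) ht
    have hL := stepLog (σ+n) t (‖s + n‖) (‖s + (n+1:ℕ)‖)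
      (‖s + n + 1/2‖) (by linarith [Nat.cast_nonneg (α := ℝ) n]) ht
      (hapos n) (hapos (n+1)) (hmpos n) (ha2 n) hb2 hm2' hP
    have hcast : ((σ+n)+1) = σ+(n:ℝ)+1 := by ring
    rw [hcast] at hL
    linarith [hdiff, hL]
  -- telescoping
  have htel : ∀ n : ℕ, F 0 ≤ F n + ((1/4)*((σ+n)/((σ+n)^2+t)) - (1/4)*(σ/(σ^2+t))
      + (1/(16*t+16*σ^2+4*σ) - 1/(16*t+16*(σ+n)^2+4*(σ+n)))) := by
    intro n
    induction n with
    | zero => push_cast; simp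
    | succ k ih =>
      have h1 := hstep k
      push_cast at ih h1 ⊢
      ring_nf at ih h1 ⊢
      linarith
  have hσpos : (0:ℝ) < σ := by linarith
  have hst : (0:ℝ) < σ^2+t := by nlinarith
  have hendpoint : 1/(16*t+16*σ^2+4*σ) ≤ (1/4)*(σ/(σ^2+t)) := by
    have e : (1/4)*(σ/(σ^2+t)) = σ/(4*(σ^2+t)) := by
      field_simp
    rw [e, div_le_div_iff₀ (by nlinarith) (by nlinarith)]
    nlinarith
  have hVbound : ∀ n : ℕ, F 0 ≤ F n + (1/4)*((σ+n)/((σ+n)^2+t)) := by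
    intro n
    have h1 := htel n
    have h2 : (0:ℝ) < 16*t+16*(σ+n)^2+4*(σ+n) := by
      have := hXpos n; nlinarith [sq_nonneg (σ+(n:ℝ))]
    have h3 : (0:ℝ) < 1/(16*t+16*(σ+n)^2+4*(σ+n)) := by positivity
    linarith
  -- bound on F n
  have hFbound : ∀ n : ℕ, F n ≤ Real.log (‖s+n‖) - Real.log (σ+n) := by
    intro n
    have hwre : (s+n+1/2).re = (σ+n) + 1/2 := hre2 n
    have hkey := abs_gamma_ratio (s+n+1/2) (by rw [hwre]; linarith [hXpos n])
      (seq_ineq (s+n+1/2) (by rw [hwre]; linarith [hXpos n]))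
    rw [hwre] at hkey
    have e1 : s+n+1/2+1/2 = s+((n+1:ℕ):ℂ) := by push_cast; ring
    have e2 : (σ+n) + 1/2 + 1/2 = (σ+n) + 1 := by ring
    rw [e1, e2, hfun1 n, norm_mul] at hkey
    have hG2 := realGamma_sq (σ+n) (hXpos n)
    have p1 : 0 < Real.Gamma ((σ+n)+1) := Real.Gamma_pos_of_pos (by linarith [hXpos n])
    have p2 : 0 < Real.Gamma ((σ+n)+1/2) := Real.Gamma_pos_of_pos (by linarith [hXpos n])
    have key3 : (σ+n) * (‖Complex.Gamma (s+n+1/2)‖)^2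
        ≤ (‖s+n‖ * ‖Complex.Gamma (s+n)‖)^2 := by
      have hsq : (Real.Gamma ((σ+n)+1) * ‖Complex.Gamma (s+n+1/2)‖)^2
          ≤ (Real.Gamma ((σ+n)+1/2) * (‖s+n‖ * ‖Complex.Gamma (s+n)‖))^2 :=
        pow_le_pow_left₀ (by positivity) hkey 2
      have c1 : ((σ+n) * (‖Complex.Gamma (s+n+1/2)‖)^2) * (Real.Gamma ((σ+n)+1)^2)
          ≤ ((‖s+n‖ * ‖Complex.Gamma (s+n)‖)^2) * (Real.Gamma ((σ+n)+1)^2) :=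
        calc ((σ+n) * (‖Complex.Gamma (s+n+1/2)‖)^2) * (Real.Gamma ((σ+n)+1)^2)
            = (σ+n) * ((Real.Gamma ((σ+n)+1) * ‖Complex.Gamma (s+n+1/2)‖)^2) := by ring
          _ ≤ (σ+n) * ((Real.Gamma ((σ+n)+1/2) * (‖s+n‖ * ‖Complex.Gamma (s+n)‖))^2) :=
              mul_le_mul_of_nonneg_left hsq (hXpos n).le
          _ = (Real.Gamma ((σ+n)+1/2)^2 * (σ+n)) * ((‖s+n‖ * ‖Complex.Gamma (s+n)‖)^2) := by
              ring
          _ ≤ (Real.Gamma ((σ+n)+1)^2) * ((‖s+n‖ * ‖Complex.Gamma (s+n)‖)^2) :=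
              mul_le_mul_of_nonneg_right hG2 (by positivity)
          _ = ((‖s+n‖ * ‖Complex.Gamma (s+n)‖)^2) * (Real.Gamma ((σ+n)+1)^2) := by
              ring
      exact le_of_mul_le_mul_right c1 (by positivity)
    -- take logs
    have hdiv : (‖Complex.Gamma (s+n+1/2)‖)^2
        ≤ (‖s+n‖ * ‖Complex.Gamma (s+n)‖)^2 / (σ+n) := by
      rw [le_div_iff₀ (hXpos n)]
      linarith [key3]
    have hlog := Real.log_le_log (pow_pos (hGhpos n) 2) hdiv
    rw [Real.log_div (pow_ne_zero 2 (mul_pos (hapos n) (hGpos n)).ne') (hXpos n).ne', Real.log_pow, Real.log_pow,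
      Real.log_mul (hapos n).ne' (hGpos n).ne'] at hlog
    rw [hFdef]
    simp only
    push_cast at hlog ⊢
    linarith
  -- the limit
  have hXt : Tendsto (fun n : ℕ => σ + (n:ℝ)) atTop atTop :=
    tendsto_atTop_add_const_left _ σ tendsto_natCast_atTop_atTop
  have part1 : Tendsto (fun n : ℕ => Real.log (‖s+n‖) - Real.log (σ+n)) atTop (𝓝 0) := by
    have e : ∀ n : ℕ, Real.log (‖s+n‖) - Real.log (σ+n)
        = (1/2)*Real.log (1 + t/((σ+n)^2)) := by
      intro n
      have h1 : Real.log (‖s+n‖) = (1/2)*Real.log ((σ+n)^2+t) := by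
        rw [← ha2 n, Real.log_pow]; push_cast; ring
      have h2 : Real.log (σ+n) = (1/2)*Real.log ((σ+n)^2) := by
        rw [Real.log_pow]; push_cast; ring
      have h3 : ((σ+n)^2+t)/((σ+n)^2) = 1 + t/((σ+n)^2) := by
        field_simp
      rw [h1, h2, ← mul_sub, ← Real.log_div (by positivity) (by positivity), h3]
    simp only [e]
    have hsqt : Tendsto (fun n : ℕ => (σ+(n:ℝ))^2) atTop atTop :=
      (tendsto_pow_atTop (n := 2) (by norm_num)).comp hXt
    have hq : Tendsto (fun n : ℕ => t/((σ+n)^2)) atTop (𝓝 0) :=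
      Tendsto.div_atTop tendsto_const_nhds hsqt
    have h1p : Tendsto (fun n : ℕ => 1 + t/((σ+n)^2)) atTop (𝓝 1) := by
      simpa using tendsto_const_nhds.add hq
    have hlog1 : Tendsto (fun n : ℕ => Real.log (1 + t/((σ+n)^2))) atTop (𝓝 0) := by
      have := (Real.continuousAt_log one_ne_zero).tendsto.comp h1p
      simpa using (show Tendsto (fun n : ℕ => Real.log (1 + t/((σ+n)^2))) atTop (𝓝 (Real.log 1)) from this)
    have h12 : Tendsto (fun n : ℕ => (1/2) * Real.log (1 + t/((σ+n)^2))) atTop (𝓝 ((1/2) * 0)) :=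
      hlog1.const_mul (1/2)
    rw [mul_zero] at h12
    exact h12
  have part2 : Tendsto (fun n : ℕ => (1/4)*((σ+n)/((σ+n)^2+t))) atTop (𝓝 0) := by
    have hb : ∀ n : ℕ, (1/4)*((σ+n)/((σ+n)^2+t)) ≤ (1/4)*((σ+(n:ℝ))⁻¹) := by
      intro n
      have h2 : (0:ℝ) < (σ+(n:ℝ))^2+t := by nlinarith [hXpos n, ht]
      apply mul_le_mul_of_nonneg_left _ (by norm_num : (0:ℝ) ≤ 1/4)
      rw [div_le_iff₀ h2, inv_mul_eq_div, le_div_iff₀ (hXpos n)]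
      nlinarith [ht]
    have hnn : ∀ n : ℕ, 0 ≤ (1/4)*((σ+n)/((σ+n)^2+t)) := by
      intro n
      have h2 : (0:ℝ) < (σ+(n:ℝ))^2+t := by nlinarith [hXpos n, ht]
      exact mul_nonneg (by norm_num) (div_nonneg (hXpos n).le h2.le)
    have htnd : Tendsto (fun n : ℕ => (1/4)*((σ+(n:ℝ))⁻¹)) atTop (𝓝 ((1/4) * 0)) :=
      (hXt.inv_tendsto_atTop).const_mul (1/4)
    rw [mul_zero] at htnd
    exact squeeze_zero hnn hb htnd
  have hV : Tendsto (fun n : ℕ => Real.log (‖s+n‖) - Real.log (σ+n)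
      + (1/4)*((σ+n)/((σ+n)^2+t))) atTop (𝓝 0) := by
    simpa using part1.add part2
  have hF0 : F 0 ≤ 0 := by
    refine ge_of_tendsto' hV (fun n => ?_)
    linarith [hVbound n, hFbound n]
  -- unfold F 0
  rw [hFdef] at hF0
  simp only [Nat.cast_zero, add_zero] at hF0
  have hlast : Real.log (‖Complex.Gamma (s+1/2)‖^2)
      ≤ Real.log (‖s‖ * ‖Complex.Gamma s‖^2) := by
    have g1 : 0 < ‖Complex.Gamma s‖ := by
      have := hGpos 0
      simpa using this
    have g2 : 0 < ‖s‖ := by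
      have := hapos 0
      simpa using this
    rw [Real.log_pow, Real.log_mul g2.ne' (by positivity), Real.log_pow]
    push_cast
    linarith
  have g1' : 0 < ‖Complex.Gamma s‖ := by
    have := hGpos 0; simpa using this
  have g2' : 0 < ‖s‖ := by
    have := hapos 0; simpa using this
  have g3' : 0 < ‖Complex.Gamma (s+1/2)‖ := by
    have := hGhpos 0; simpa using this
  exact (Real.log_le_log_iff (pow_pos g3' 2) (mul_pos g2' (pow_pos g1' 2))).mp hlast

end Main


theorem gamma_ratio_bounds (z : ℂ) (hz : -1/4 < z.re) :
    ‖z + 1/2‖ ^ (-(1/2) : ℝ)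
        ≤ ‖Complex.Gamma (z + 1/2) / Complex.Gamma (z + 1)‖ ∧
    ‖Complex.Gamma (z + 1/2) / Complex.Gamma (z + 1)‖
        ≤ ‖z + 1‖ ^ ((1/2) : ℝ) / ‖z + 1/2‖ := by
  have h1re : (z + 1/2).re = z.re + 1/2 := by simp [Complex.add_re]
  have h2re : (z + 1).re = z.re + 1 := by simp
  have hne1 : z + 1/2 ≠ 0 := by
    intro h
    have := congrArg Complex.re h
    rw [h1re] at this
    simp at this
    linarith
  have hne2 : z + 1 ≠ 0 := by
    intro h
    have := congrArg Complex.re h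
    rw [h2re] at this
    simp at this
    linarith
  have ha : 0 < ‖z + 1/2‖ := norm_pos_iff.mpr hne1
  have hb : 0 < ‖z + 1‖ := norm_pos_iff.mpr hne2
  have hgh : 0 < ‖Complex.Gamma (z + 1/2)‖ :=
    norm_pos_iff.mpr (Complex.Gamma_ne_zero_of_re_pos (by rw [h1re]; linarith))
  have hg1 : 0 < ‖Complex.Gamma (z + 1)‖ :=
    norm_pos_iff.mpr (Complex.Gamma_ne_zero_of_re_pos (by rw [h2re]; linarith))
  have R1 := main_ineq (z + 1/2) (by rw [h1re]; linarith)
  rw [show z + 1/2 + 1/2 = z + 1 by ring] at R1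
  have R2 := main_ineq (z + 1) (by rw [h2re]; linarith)
  rw [show z + 1 + 1/2 = (z + 1/2) + 1 by ring,
    Complex.Gamma_add_one _ hne1, norm_mul] at R2
  rw [norm_div]
  constructor
  · apply le_of_pow_le_pow_left₀ two_ne_zero (by positivity)
    have e : (‖z + 1/2‖ ^ (-(1/2) : ℝ))^2 = (‖z + 1/2‖)⁻¹ := by
      rw [← Real.rpow_natCast (‖z + 1/2‖ ^ (-(1/2) : ℝ)) 2, ← Real.rpow_mul ha.le]
      norm_num [Real.rpow_neg_one]
    rw [e, div_pow, le_div_iff₀ (pow_pos hg1 2), inv_mul_eq_div, div_le_iff₀ ha]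
    nlinarith [R1]
  · apply le_of_pow_le_pow_left₀ two_ne_zero (by positivity)
    have e : (‖z + 1‖ ^ ((1/2) : ℝ))^2 = ‖z + 1‖ := by
      rw [← Real.rpow_natCast (‖z + 1‖ ^ ((1/2) : ℝ)) 2, ← Real.rpow_mul hb.le]
      norm_num
    rw [div_pow, div_pow, e, div_le_div_iff₀ (pow_pos hg1 2) (pow_pos ha 2)]
    nlinarith [R2]
end

section
/- For all z ∈ ℂ with Re z > 3/2, one has ∫₀^∞ e^{-kz}·arctan((e^k - 1)^{1/2}) dk = (1/(2z))·Γ(z + 1/2)Γ(1/2)/Γ(z + 1). -/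
open Real Complex MeasureTheory Set

lemma beta_sub_aux (z : ℂ) (hz : 3/2 < z.re) :
    IntegrableOn (fun k : ℝ => Complex.exp (-k * z) *
        (((Real.exp k - 1) ^ (-(1/2) : ℝ) : ℝ) : ℂ)) (Ioi 0) ∧
    ∫ k in Ioi (0:ℝ), Complex.exp (-k * z) * (((Real.exp k - 1) ^ (-(1/2) : ℝ) : ℝ) : ℂ)
      = Complex.betaIntegral (z + 1/2) (1/2) := by
  set g : ℝ → ℂ := fun k => Complex.exp (-k * z) *
      (((Real.exp k - 1) ^ (-(1/2) : ℝ) : ℝ) : ℂ) with hg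
  set b : ℝ → ℂ := fun x : ℝ => (x:ℂ) ^ (z + 1/2 - 1) * (1 - (x:ℂ)) ^ ((1/2 : ℂ) - 1) with hb
  have himg : (fun x : ℝ => -Real.log x) '' Ioo 0 1 = Ioi 0 := by
    ext y
    constructor
    · rintro ⟨x, ⟨hx0, hx1⟩, rfl⟩
      simpa using Real.log_neg hx0 hx1
    · intro hy
      refine ⟨Real.exp (-y), ⟨Real.exp_pos _, ?_⟩, ?_⟩
      · rw [Real.exp_lt_one_iff]; simpa using hy.out
      · simp [Real.log_exp]
  have hderiv : ∀ x ∈ Ioo (0:ℝ) 1,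
      HasDerivWithinAt (fun x : ℝ => -Real.log x) (-x⁻¹) (Ioo 0 1) x := fun x hx =>
    ((Real.hasDerivAt_log hx.1.ne').neg).hasDerivWithinAt
  have hinj : InjOn (fun x : ℝ => -Real.log x) (Ioo 0 1) := by
    intro a ha c hc h
    exact Real.log_injOn_pos (mem_Ioi.2 ha.1) (mem_Ioi.2 hc.1) (by linarith [neg_injective h])
  have hpt : ∀ x ∈ Ioo (0:ℝ) 1, |(-x⁻¹)| • g (-Real.log x) = b x := by
    intro x hx
    obtain ⟨hx0, hx1⟩ := hx
    have hx0' : (x:ℂ) ≠ 0 := by exact_mod_cast hx0.ne'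
    have hexp : Real.exp (-Real.log x) = x⁻¹ := by
      rw [Real.exp_neg, Real.exp_log hx0]
    have hre : (x⁻¹ - 1 : ℝ) ^ (-(1/2) : ℝ)
        = (1 - x) ^ (-(1/2) : ℝ) * x ^ ((1/2) : ℝ) := by
      have h1 : (x⁻¹ - 1 : ℝ) = (1 - x) * x⁻¹ := by field_simp
      rw [h1, Real.mul_rpow (by linarith) (by positivity), Real.inv_rpow hx0.le,
        ← Real.rpow_neg hx0.le]
      norm_num
    have hcexp : Complex.exp (-(-Real.log x : ℝ) * z) = (x:ℂ) ^ z := by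
      rw [Complex.cpow_def_of_ne_zero hx0', ← Complex.ofReal_log hx0.le]
      push_cast
      ring_nf
    have habs : |(-x⁻¹)| = x⁻¹ := by
      rw [abs_neg, abs_of_pos (by positivity)]
    rw [hg, hb]
    simp only [habs, hexp, hre, hcexp, Complex.real_smul]
    push_cast [Complex.ofReal_cpow (by linarith : (0:ℝ) ≤ 1 - x),
      Complex.ofReal_cpow hx0.le]
    have hxinv : (x:ℂ)⁻¹ = (x:ℂ) ^ (-1 : ℂ) := by rw [Complex.cpow_neg_one]
    rw [hxinv, show z + (1:ℂ)/2 - 1 = -1 + (z + 1/2) by ring,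
      show ((1:ℂ)/2 - 1) = -(1/2) by norm_num,
      Complex.cpow_add _ _ hx0', Complex.cpow_add _ _ hx0']
    ring
  have hbint : IntegrableOn b (Ioo (0:ℝ) 1) := by
    have h1 : (0:ℝ) < (z + 1/2).re := by
      have : (z + 1/2).re = z.re + 1/2 := by simp [Complex.add_re]
      rw [this]; linarith
    have h2 : (0:ℝ) < ((1:ℂ)/2).re := by norm_num
    exact ((Complex.betaIntegral_convergent h1 h2).1).mono_set Ioo_subset_Ioc_self
  have hint : IntegrableOn g (Ioi (0:ℝ)) := by
    rw [← himg,
      integrableOn_image_iff_integrableOn_abs_deriv_smul measurableSet_Ioo hderiv hinj]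
    exact hbint.congr_fun (fun x hx => (hpt x hx).symm) measurableSet_Ioo
  refine ⟨hint, ?_⟩
  rw [← himg,
    integral_image_eq_integral_abs_deriv_smul measurableSet_Ioo hderiv hinj,
    setIntegral_congr_fun measurableSet_Ioo hpt, Complex.betaIntegral,
    intervalIntegral.integral_of_le zero_le_one, ← integral_Ioc_eq_integral_Ioo]

theorem laplace_arctan (z : ℂ) (hz : 3/2 < z.re) :
    ∫ k in Ioi (0:ℝ),
        Complex.exp (-k * z) * (Real.arctan ((Real.exp k - 1) ^ (1/2 : ℝ)) : ℝ)
      = (1 / (2 * z)) * Complex.Gamma (z + 1/2) * Complex.Gamma (1/2)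
          / Complex.Gamma (z + 1) := by
  have hz0 : z ≠ 0 := by
    intro h; rw [h] at hz; simp at hz; linarith
  set A : ℝ → ℝ := fun k => Real.arctan ((Real.exp k - 1) ^ (1/2 : ℝ)) with hA_def
  set w : ℝ → ℝ := fun k => (Real.exp k - 1) ^ (-(1/2) : ℝ) with hw_def
  set F : ℝ → ℂ := fun k => -(z⁻¹) * (Complex.exp (-k * z) * (A k : ℂ)) with hF_def
  set G : ℝ → ℂ := fun k => Complex.exp (-k * z) * (A k : ℂ)
      - (z⁻¹ / 2) * (Complex.exp (-k * z) * (w k : ℂ)) with hG_def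
  obtain ⟨hwint, hwval⟩ := beta_sub_aux z hz
  -- derivative of the complex exponential
  have hE : ∀ k : ℝ, HasDerivAt (fun t : ℝ => Complex.exp (-t * z))
      (Complex.exp (-k * z) * (-1 * z)) k := by
    intro k
    have h0 : HasDerivAt (fun t : ℝ => -(t : ℂ) * z) (-1 * z) k := by
      simpa using ((Complex.ofRealCLM.hasDerivAt (x := k)).neg.mul_const z)
    exact h0.cexp
  -- derivative of the arctan part
  have hA : ∀ k ∈ Ioi (0:ℝ), HasDerivAt A (w k / 2) k := by
    intro k hk
    have hk1 : (1:ℝ) < Real.exp k := by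
      simpa using Real.exp_lt_exp.2 hk.out
    have hk' : (0:ℝ) < Real.exp k - 1 := by linarith
    have h1 : HasDerivAt (fun t : ℝ => Real.exp t - 1) (Real.exp k) k :=
      (Real.hasDerivAt_exp k).sub_const 1
    have h2 : HasDerivAt (fun y : ℝ => y ^ (1/2 : ℝ))
        ((1/2) * (Real.exp k - 1) ^ ((1/2 : ℝ) - 1)) (Real.exp k - 1) :=
      Real.hasDerivAt_rpow_const (Or.inl hk'.ne')
    have h3 := (Real.hasDerivAt_arctan ((Real.exp k - 1) ^ (1/2 : ℝ))).comp k (h2.comp k h1)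
    convert h3 using 1
    case e'_4 => rfl
    case e'_5 => rfl
    case e'_8 => rfl
    have hsq : ((Real.exp k - 1) ^ (1/2 : ℝ)) ^ 2 = Real.exp k - 1 := by
      rw [← Real.rpow_natCast ((Real.exp k - 1) ^ (1/2 : ℝ)) 2, ← Real.rpow_mul hk'.le]
      norm_num
    rw [hsq, show ((1:ℝ)/2 - 1) = -(1/2) by norm_num,
      show (1:ℝ) + (Real.exp k - 1) = Real.exp k by ring]
    simp only [hw_def]
    field_simp
  -- derivative of F is G on Ioi 0
  have hF' : ∀ k ∈ Ioi (0:ℝ), HasDerivAt F (G k) k := by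
    intro k hk
    have h := ((hE k).mul ((hA k hk).ofReal_comp)).const_mul (-(z⁻¹))
    convert h using 1
    case e'_4 => rfl
    case e'_8 => rfl
    simp only [hG_def]
    push_cast
    field_simp
    ring
  -- continuity of F at 0
  have hcont : ContinuousWithinAt F (Ici (0:ℝ)) 0 := by
    apply ContinuousAt.continuousWithinAt
    have hc1 : ContinuousAt (fun t : ℝ => Complex.exp (-t * z)) 0 := by
      fun_prop
    have hc3 : ContinuousAt A 0 :=
      (Real.continuous_arctan.comp ((Real.continuous_rpow_const (by norm_num)).comp
        (Real.continuous_exp.sub continuous_const))).continuousAt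
    exact continuousAt_const.mul (hc1.mul (Complex.continuous_ofReal.continuousAt.comp hc3))
  -- F tends to 0 at top
  have habs : ∀ k : ℝ, ‖Complex.exp (-k * z)‖ = Real.exp (-(z.re * k)) := by
    intro k
    rw [Complex.norm_exp]
    congr 1
    simp [Complex.mul_re]
    ring
  have harct : ∀ x : ℝ, |Real.arctan x| ≤ π / 2 := by
    intro x
    exact abs_le.2 ⟨by linarith [Real.neg_pi_div_two_lt_arctan x],
      (Real.arctan_lt_pi_div_two x).le⟩
  have htend : Filter.Tendsto F Filter.atTop (nhds 0) := by
    have hbd : ∀ k : ℝ, ‖F k‖ ≤ ‖z⁻¹‖ * (Real.exp (-(z.re * k)) * (π / 2)) := by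
      intro k
      have : ‖F k‖ = ‖z⁻¹‖ * (Real.exp (-(z.re * k)) * |A k|) := by
        simp only [hF_def, norm_mul, norm_neg, habs k, Real.norm_eq_abs, Complex.norm_real]
      rw [this]
      gcongr
      exact harct _
    have h1 : Filter.Tendsto (fun k : ℝ => Real.exp (-(z.re * k))) Filter.atTop (nhds 0) :=
      Real.tendsto_exp_neg_atTop_nhds_zero.comp
        (Filter.Tendsto.const_mul_atTop (by linarith) Filter.tendsto_id)
    have h2 : Filter.Tendsto (fun k : ℝ => ‖z⁻¹‖ * (Real.exp (-(z.re * k)) * (π / 2)))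
        Filter.atTop (nhds 0) := by
      simpa using ((h1.mul_const (π / 2)).const_mul ‖z⁻¹‖)
    exact squeeze_zero_norm hbd h2
  -- integrability of the arctan integrand
  have hmeas : AEStronglyMeasurable
      (fun k : ℝ => Complex.exp (-k * z) * (A k : ℂ)) (volume.restrict (Ioi 0)) := by
    apply Continuous.aestronglyMeasurable
    apply Continuous.mul
    · fun_prop
    · exact Complex.continuous_ofReal.comp (Real.continuous_arctan.comp
        ((Real.continuous_rpow_const (by norm_num)).comp
          (Real.continuous_exp.sub continuous_const)))
  have hAint : IntegrableOn (fun k : ℝ => Complex.exp (-k * z) * (A k : ℂ)) (Ioi 0) := by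
    apply Integrable.mono' ((exp_neg_integrableOn_Ioi 0 (by linarith : (0:ℝ) < z.re)).const_mul
      (π / 2)) hmeas
    filter_upwards with k
    rw [norm_mul, habs k, Complex.norm_real, Real.norm_eq_abs]
    calc Real.exp (-(z.re * k)) * |A k| ≤ Real.exp (-(z.re * k)) * (π / 2) := by
          gcongr; exact harct _
      _ = π / 2 * Real.exp (-z.re * k) := by ring_nf
  have hGint : IntegrableOn G (Ioi (0:ℝ)) := hAint.sub (hwint.const_mul _)
  -- FTC on (0, ∞)
  have key : ∫ k in Ioi (0:ℝ), G k = 0 - F 0 :=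
    integral_Ioi_of_hasDerivAt_of_tendsto hcont hF' hGint htend
  have hF0 : F 0 = 0 := by
    have hA0 : A 0 = 0 := by
      simp [hA_def, Real.exp_zero, sub_self, Real.zero_rpow (by norm_num : (1/2:ℝ) ≠ 0)]
    simp [hF_def, hA0]
  rw [hF0, sub_zero] at key
  have hsplit : ∫ k in Ioi (0:ℝ), G k
      = (∫ k in Ioi (0:ℝ), Complex.exp (-k * z) * (A k : ℂ))
        - (z⁻¹ / 2) * ∫ k in Ioi (0:ℝ), Complex.exp (-k * z) * (w k : ℂ) := by
    rw [hG_def, integral_sub hAint (hwint.const_mul _), integral_const_mul]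
  rw [hsplit] at key
  have hmain : (∫ k in Ioi (0:ℝ), Complex.exp (-k * z) * (A k : ℂ))
      = (z⁻¹ / 2) * Complex.betaIntegral (z + 1/2) (1/2) := by
    rw [← hwval]
    linear_combination key
  -- Beta to Gamma
  have h1 : (0:ℝ) < (z + 1/2).re := by
    have : (z + 1/2).re = z.re + 1/2 := by simp [Complex.add_re]
    rw [this]; linarith
  have h2 : (0:ℝ) < ((1:ℂ)/2).re := by norm_num
  have h5 : Complex.Gamma (z + 1) ≠ 0 := by
    apply Complex.Gamma_ne_zero_of_re_pos
    simp only [Complex.add_re, Complex.one_re]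
    linarith
  have hbg : Complex.betaIntegral (z + 1/2) (1/2)
      = Complex.Gamma (z + 1/2) * Complex.Gamma (1/2) / Complex.Gamma (z + 1) := by
    have h3 := Complex.Gamma_mul_Gamma_eq_betaIntegral h1 h2
    rw [show z + 1/2 + 1/2 = z + 1 by ring] at h3
    rw [eq_div_iff h5, h3]
    ring
  have hfin : (1 / (2 * z) : ℂ) = z⁻¹ / 2 := by
    rw [one_div, mul_inv, div_eq_mul_inv, mul_comm]
  rw [hmain, hbg, hfin]
  ring
end
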